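/- The function h ↦ δ_m(h) := inf{ mes{ t ∈ [0, 2π) : ∏_{j=1}^m |2 sin((t − φ_j)/2)| ≥ h } : φ ∈ ℝ^m } is strictly decreasing on [0, 2], with δ_m(0) = 2π and δ_m(2) = 0; moreover for each h ∈ [0, 2] the infimum is attained at some φ* ∈ ℝ^m. -/

import Mathlib

open Real MeasureTheory

namespace Stmt16

noncomputable def Complex.abs : AbsoluteValue ℂ ℝ where
  toFun := fun z => ‖z‖
  map_mul' := norm_mul
  nonneg' := norm_nonneg
  eq_zero' := fun _ => norm_eq_zero
  add_le' := norm_add_le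

lemma Complex.abs_apply (z : ℂ) : Complex.abs z = ‖z‖ := rfl

lemma Complex.abs_exp_ofReal_mul_I (t : ℝ) : Complex.abs (Complex.exp (t * Complex.I)) = 1 :=
  _root_.Complex.norm_exp_ofReal_mul_I t

lemma Complex.abs_I : Complex.abs Complex.I = 1 := _root_.Complex.norm_I

lemma Complex.abs_two : Complex.abs 2 = 2 := by simp [Complex.abs_apply]

lemma Complex.abs_ofReal (r : ℝ) : Complex.abs (r : ℂ) = |r| := by
  simp [Complex.abs_apply]

lemma Complex.abs_natCast (n : ℕ) : Complex.abs (n : ℂ) = n := _root_.Complex.norm_natCast n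

lemma Complex.sq_abs (z : ℂ) : Complex.abs z ^ 2 = Complex.normSq z := _root_.Complex.sq_norm z

lemma Complex.abs_exp (z : ℂ) : Complex.abs (Complex.exp z) = Real.exp z.re :=
  _root_.Complex.norm_exp z

lemma Complex.abs_mul_exp_arg_mul_I (x : ℂ) :
    ↑(Complex.abs x) * Complex.exp (x.arg * Complex.I) = x :=
  _root_.Complex.norm_mul_exp_arg_mul_I x

noncomputable def Pf {m : ℕ} (φ : Fin m → ℝ) (t : ℝ) : ℝ :=
  ∏ j, |2 * Real.sin ((t - φ j) / 2)|

noncomputable def ee (t : ℝ) : ℂ := Complex.exp (t * Complex.I)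

lemma ee_abs (t : ℝ) : Complex.abs (ee t) = 1 := Complex.abs_exp_ofReal_mul_I t

lemma ee_ne_zero (t : ℝ) : ee t ≠ 0 := Complex.exp_ne_zero _

lemma ee_period (t : ℝ) (k : ℤ) : ee (t - 2 * π * k) = ee t := by
  unfold ee
  push_cast
  rw [sub_mul, Complex.exp_sub,
    show (2 * (π:ℂ) * (k:ℂ)) * Complex.I = (k:ℂ) * (2 * π * Complex.I) by ring,
    Complex.exp_int_mul_two_pi_mul_I, div_one]

lemma abs_ee_sub_ee (t φ : ℝ) :
    Complex.abs (ee t - ee φ) = |2 * Real.sin ((t - φ) / 2)| := by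
  have e1 : (t : ℂ) * Complex.I
      = ((((t+φ)/2 : ℝ)) : ℂ) * Complex.I + ((((t-φ)/2 : ℝ)) : ℂ) * Complex.I := by
    push_cast; ring
  have e2 : (φ : ℂ) * Complex.I
      = ((((t+φ)/2 : ℝ)) : ℂ) * Complex.I - ((((t-φ)/2 : ℝ)) : ℂ) * Complex.I := by
    push_cast; ring
  unfold ee
  rw [e1, e2, Complex.exp_add, Complex.exp_sub]
  have hne := Complex.exp_ne_zero ((((t-φ)/2 : ℝ)) * Complex.I)
  have hsin : Complex.exp ((((t-φ)/2 : ℝ)) * Complex.I)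
      - (Complex.exp ((((t-φ)/2 : ℝ)) * Complex.I))⁻¹
      = 2 * Complex.sin (((t-φ)/2 : ℝ)) * Complex.I := by
    rw [Complex.sin, neg_mul, Complex.exp_neg]
    have hI := Complex.I_mul_I
    set E := Complex.exp ((((t-φ)/2 : ℝ)) * Complex.I)
    linear_combination (E - E⁻¹) * hI
  have e3 : ∀ A B : ℂ, B ≠ 0 → A * B - A / B = A * (B - B⁻¹) := by
    intro A B hB; field_simp
  rw [e3 _ _ hne, hsin, map_mul, Complex.abs_exp_ofReal_mul_I, one_mul,
    map_mul, map_mul, Complex.abs_I, Complex.abs_two, ← Complex.ofReal_sin, Complex.abs_ofReal,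
    mul_one, abs_mul]
  norm_num

lemma Pf_eq {m : ℕ} (φ : Fin m → ℝ) (t : ℝ) :
    Pf φ t = Complex.abs (∏ j, (ee t - ee (φ j))) := by
  rw [map_prod]
  exact Finset.prod_congr rfl fun j _ => (abs_ee_sub_ee t (φ j)).symm

lemma Pf_nonneg {m : ℕ} (φ : Fin m → ℝ) (t : ℝ) : 0 ≤ Pf φ t :=
  Finset.prod_nonneg fun j _ => abs_nonneg _

lemma Pf_period {m : ℕ} (φ : Fin m → ℝ) (t : ℝ) (k : ℤ) :
    Pf φ (t - 2 * π * k) = Pf φ t := by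
  rw [Pf_eq, Pf_eq, ee_period]

lemma Pf_shift {m : ℕ} (φ : Fin m → ℝ) (k : Fin m → ℤ) (t : ℝ) :
    Pf (fun j => φ j - 2 * π * k j) t = Pf φ t := by
  rw [Pf_eq, Pf_eq]
  congr 1
  exact Finset.prod_congr rfl fun j _ => by rw [ee_period]

lemma continuous_Pf_t {m : ℕ} (φ : Fin m → ℝ) : Continuous (Pf φ) := by
  unfold Pf
  exact continuous_finset_prod _ fun j _ => (by fun_prop)

lemma continuous_Pf_phi {m : ℕ} (t : ℝ) : Continuous (fun φ : Fin m → ℝ => Pf φ t) := by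
  unfold Pf
  exact continuous_finset_prod _ fun j _ => by
    have : Continuous fun φ : Fin m → ℝ => φ j := continuous_apply j
    fun_prop


lemma injOn_ee : Set.InjOn ee (Set.Ico 0 (2 * π)) := by
  intro x hx y hy hxy
  unfold ee at hxy
  rw [Complex.exp_eq_exp_iff_exists_int] at hxy
  obtain ⟨n, hn⟩ := hxy
  have h2 : ((x : ℂ) - y - n * (2 * π)) * Complex.I = 0 := by
    push_cast
    linear_combination hn
  rcases mul_eq_zero.1 h2 with h3 | h3
  · have h4 : x - y - n * (2 * π) = 0 := by exact_mod_cast h3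
    have hπ := Real.pi_pos
    have hn0 : n = 0 := by
      by_contra hne
      have h5 : (1 : ℝ) ≤ |(n : ℝ)| := by
        have : (1 : ℤ) ≤ |n| := Int.one_le_abs hne
        exact_mod_cast this
      have h6 : |x - y| < 2 * π := by
        rw [abs_lt]; constructor <;> nlinarith [hx.1, hx.2, hy.1, hy.2]
      have h7 : x - y = n * (2 * π) := by linarith
      rw [h7, abs_mul, abs_of_pos (by positivity : (0:ℝ) < 2*π)] at h6
      nlinarith
    rw [hn0] at h4; push_cast at h4; linarith
  · exact absurd h3 Complex.I_ne_zero

lemma finite_level {m : ℕ} (hm : 1 ≤ m) (φ : Fin m → ℝ) (h : ℝ) :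
    Set.Finite {t : ℝ | t ∈ Set.Ico 0 (2*π) ∧ Pf φ t = h} := by
  classical
  set a : Fin m → ℂ := fun j => ee (φ j) with ha
  have haz : ∀ j, a j ≠ 0 := fun j => Complex.exp_ne_zero _
  have hbz : ∀ j, (starRingEnd ℂ) (a j) ≠ 0 := fun j => by
    simpa using haz j
  set p : Polynomial ℂ :=
    (∏ j, ((Polynomial.X - Polynomial.C (a j)) *
      (Polynomial.C 1 - Polynomial.C ((starRingEnd ℂ) (a j)) * Polynomial.X)))
      - Polynomial.C ((h:ℂ)^2) * Polynomial.X ^ m with hp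
  have hfac : ∀ j : Fin m,
      ((Polynomial.X - Polynomial.C (a j)) *
        (Polynomial.C 1 - Polynomial.C ((starRingEnd ℂ) (a j)) * Polynomial.X))
      = Polynomial.C (-((starRingEnd ℂ) (a j))) * Polynomial.X^2
        + Polynomial.C (1 + a j * ((starRingEnd ℂ) (a j))) * Polynomial.X
        + Polynomial.C (-(a j)) := by
    intro j
    simp only [map_neg, map_add, map_one, map_mul]
    ring
  have hfne : ∀ j : Fin m, ((Polynomial.X - Polynomial.C (a j)) *
        (Polynomial.C 1 - Polynomial.C ((starRingEnd ℂ) (a j)) * Polynomial.X)) ≠ 0 := by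
    intro j
    rw [hfac j]
    exact Polynomial.ne_zero_of_natDegree_gt (n := 0)
      (by rw [Polynomial.natDegree_quadratic (neg_ne_zero.2 (hbz j))]; norm_num)
  have hRdeg : (∏ j, ((Polynomial.X - Polynomial.C (a j)) *
      (Polynomial.C 1 - Polynomial.C ((starRingEnd ℂ) (a j)) * Polynomial.X))).natDegree
      = 2 * m := by
    rw [Polynomial.natDegree_prod _ _ (fun j _ => hfne j)]
    have : ∀ j : Fin m, ((Polynomial.X - Polynomial.C (a j)) *
        (Polynomial.C 1 - Polynomial.C ((starRingEnd ℂ) (a j)) * Polynomial.X)).natDegree = 2 := by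
      intro j; rw [hfac j]; exact Polynomial.natDegree_quadratic (neg_ne_zero.2 (hbz j))
    rw [Finset.sum_congr rfl fun j _ => this j, Finset.sum_const, Finset.card_univ,
      Fintype.card_fin, smul_eq_mul, mul_comm]
  have hRlead : (∏ j, ((Polynomial.X - Polynomial.C (a j)) *
      (Polynomial.C 1 - Polynomial.C ((starRingEnd ℂ) (a j)) * Polynomial.X))).leadingCoeff
      = ∏ j, (-((starRingEnd ℂ) (a j))) := by
    rw [Polynomial.leadingCoeff_prod]
    refine Finset.prod_congr rfl fun j _ => ?_
    rw [hfac j]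
    exact Polynomial.leadingCoeff_quadratic (neg_ne_zero.2 (hbz j))
  have hpcoeff : p.coeff (2*m) ≠ 0 := by
    rw [hp, Polynomial.coeff_sub, Polynomial.coeff_C_mul, Polynomial.coeff_X_pow,
      if_neg (by omega : ¬ 2*m = m)]
    rw [← hRdeg, Polynomial.coeff_natDegree, hRlead]
    simp only [mul_zero, sub_zero]
    exact Finset.prod_ne_zero_iff.2 fun j _ => neg_ne_zero.2 (hbz j)
  have hpne : p ≠ 0 := fun h0 => hpcoeff (by rw [h0]; simp)
  have hroot : ∀ t : ℝ, Pf φ t = h →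
      Polynomial.IsRoot p (ee t) := by
    intro t ht
    have hz : ee t * (starRingEnd ℂ) (ee t) = 1 := by
      rw [Complex.mul_conj, ← Complex.sq_abs, ee_abs]; norm_num
    have hfac2 : ∀ j, (ee t - a j) * ((1:ℂ) - (starRingEnd ℂ) (a j) * ee t)
        = ee t * (((Complex.abs (ee t - a j))^2 : ℝ) : ℂ) := by
      intro j
      have h1 : (1 : ℂ) - (starRingEnd ℂ) (a j) * ee t
          = ee t * (starRingEnd ℂ) (ee t - a j) := by
        rw [map_sub, mul_sub, hz]; ring
      rw [h1, show (ee t - a j) * (ee t * (starRingEnd ℂ) (ee t - a j))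
          = ee t * ((ee t - a j) * (starRingEnd ℂ) (ee t - a j)) from by ring,
        Complex.mul_conj, ← Complex.sq_abs]
    have habs : ∏ j, Complex.abs (ee t - a j) = h := by
      rw [← ht, Pf_eq φ t, map_prod]
    have heval : Polynomial.eval (ee t) p = 0 := by
      rw [hp]
      simp only [Polynomial.eval_sub, Polynomial.eval_prod, Polynomial.eval_mul,
        Polynomial.eval_X, Polynomial.eval_C, Polynomial.eval_one, Polynomial.eval_pow]
      rw [Finset.prod_congr rfl fun j _ => hfac2 j, Finset.prod_mul_distrib,
        Finset.prod_const, Finset.card_univ, Fintype.card_fin]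
      have h2 : ∏ j, (((Complex.abs (ee t - a j))^2 : ℝ) : ℂ) = ((h:ℂ))^2 := by
        rw [← Complex.ofReal_prod, Finset.prod_pow, habs]
        push_cast; ring
      rw [h2]; ring
    exact heval
  apply Set.Finite.of_finite_image (f := ee) ?_
    (injOn_ee.mono (fun t ht => ht.1))
  apply Set.Finite.subset (Polynomial.finite_setOf_isRoot hpne)
  rintro z ⟨t, ⟨htI, htP⟩, rfl⟩
  exact hroot t htP

lemma exists_abs_ge_two {m : ℕ} (hm : 1 ≤ m) (φ : Fin m → ℝ) :
    ∃ s : ℝ, 2 ≤ Complex.abs (∏ j, (ee s - ee (φ j))) := by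
  classical
  set a : Fin m → ℂ := fun j => ee (φ j) with ha
  set Q : Polynomial ℂ := ∏ j, (Polynomial.X - Polynomial.C (a j)) with hQ
  have hmonic : Q.Monic :=
    Polynomial.monic_prod_of_monic _ _ fun j _ => Polynomial.monic_X_sub_C _
  have hdeg : Q.natDegree = m := by
    rw [hQ, Polynomial.natDegree_prod _ _ (fun j _ => Polynomial.X_sub_C_ne_zero (a j))]
    simp [Polynomial.natDegree_X_sub_C]
  set c : ℂ := Q.eval 0 with hc
  have hcabs : Complex.abs c = 1 := by
    rw [hc, hQ, Polynomial.eval_prod, map_prod]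
    have : ∀ j : Fin m, Complex.abs (Polynomial.eval 0 (Polynomial.X - Polynomial.C (a j)))
        = 1 := by
      intro j
      simp only [Polynomial.eval_sub, Polynomial.eval_X, Polynomial.eval_C, zero_sub, map_neg_eq_map]
      exact ee_abs (φ j)
    rw [Finset.prod_congr rfl fun j _ => this j]
    simp
  have hcne : c ≠ 0 := by intro h0; rw [h0] at hcabs; simp at hcabs
  set z : ℂ := Complex.exp (Complex.log c / m) with hzdef
  have hzm : z ^ m = c := by
    rw [hzdef, ← Complex.exp_nat_mul, mul_div_cancel₀]
    · exact Complex.exp_log hcne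
    · exact_mod_cast (Nat.cast_ne_zero (R := ℂ)).2 (by omega)
  have hzabs : Complex.abs z = 1 := by
    have h1 : (Complex.abs z)^m = 1 := by rw [← map_pow, hzm, hcabs]
    rcases lt_trichotomy (Complex.abs z) 1 with hlt | heq | hgt
    · have := pow_lt_one₀ (Complex.abs.nonneg z) hlt (by omega : m ≠ 0)
      rw [h1] at this; linarith
    · exact heq
    · have := one_lt_pow₀ hgt (by omega : m ≠ 0)
      rw [h1] at this; linarith
  set ζ : ℂ := Complex.exp (2 * π * Complex.I / m) with hζ
  have hζabs : Complex.abs ζ = 1 := by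
    rw [hζ, Complex.abs_exp]
    have : (2 * (π:ℂ) * Complex.I / (m:ℂ)).re = 0 := by
      rw [show (2 * (π:ℂ) * Complex.I) = ((2*π : ℝ):ℂ) * Complex.I by push_cast; ring]
      rw [show (((2*π : ℝ):ℂ) * Complex.I / (m:ℂ)) = ((2*π/(m:ℝ) : ℝ):ℂ) * Complex.I by
        push_cast; ring]
      simp
    rw [this, Real.exp_zero]
  have hprim : IsPrimitiveRoot ζ m := Complex.isPrimitiveRoot_exp m (by omega)
  have hev : ∀ w : ℂ, Polynomial.eval w Q = ∑ j ∈ Finset.range (m+1), Q.coeff j * w^j :=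
    fun w => Polynomial.eval_eq_sum_range' (by omega : Q.natDegree < m+1) w
  have hsum : ∑ k ∈ Finset.range m, Polynomial.eval (z * ζ^k) Q = 2 * m * c := by
    have step1 : ∑ k ∈ Finset.range m, Polynomial.eval (z * ζ^k) Q
        = ∑ j ∈ Finset.range (m+1), Q.coeff j * z^j * (∑ k ∈ Finset.range m, (ζ^j)^k) := by
      rw [Finset.sum_congr rfl fun k _ => hev (z * ζ^k), Finset.sum_comm]
      refine Finset.sum_congr rfl fun j _ => ?_
      rw [Finset.mul_sum]
      refine Finset.sum_congr rfl fun k _ => ?_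
      rw [mul_pow, ← pow_mul, mul_comm k j, pow_mul]
      ring
    rw [step1]
    have hsub : ({0, m} : Finset ℕ) ⊆ Finset.range (m+1) := by
      intro x hx; simp only [Finset.mem_insert, Finset.mem_singleton] at hx
      rcases hx with rfl | rfl <;> simp <;> omega
    have hzero : ∀ j ∈ Finset.range (m+1), j ∉ ({0, m} : Finset ℕ) →
        Q.coeff j * z^j * (∑ k ∈ Finset.range m, (ζ^j)^k) = 0 := by
      intro j hj hnj
      simp only [Finset.mem_insert, Finset.mem_singleton, not_or] at hnj
      have hlt : j < m := by simp only [Finset.mem_range] at hj; omega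
      have hne1 : ζ^j ≠ 1 := hprim.pow_ne_one_of_pos_of_lt hnj.1 hlt
      have : ∑ k ∈ Finset.range m, (ζ^j)^k = 0 := by
        rw [geom_sum_eq hne1, ← pow_mul, mul_comm j m, pow_mul, hprim.pow_eq_one,
          one_pow, sub_self, zero_div]
      rw [this, mul_zero]
    rw [← Finset.sum_subset hsub hzero, Finset.sum_pair (by omega : (0:ℕ) ≠ m)]
    have hc0 : Q.coeff 0 = c := by rw [Polynomial.coeff_zero_eq_eval_zero]
    have hcm : Q.coeff m = 1 := by rw [← hdeg]; exact hmonic.coeff_natDegree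
    rw [hc0, hcm, hprim.pow_eq_one]
    simp [hzm]
    ring
  by_contra hcon
  push_neg at hcon
  have hk : ∀ k ∈ Finset.range m, Complex.abs (Polynomial.eval (z * ζ^k) Q) < 2 := by
    intro k _
    have hwabs : Complex.abs (z * ζ^k) = 1 := by
      rw [map_mul, map_pow, hzabs, hζabs]; simp
    have hee : ee (Complex.arg (z * ζ^k)) = z * ζ^k := by
      have := Complex.abs_mul_exp_arg_mul_I (z * ζ^k)
      rw [hwabs] at this
      simpa [ee] using this
    have h1 := hcon (Complex.arg (z * ζ^k))
    have h2 : Polynomial.eval (z * ζ^k) Q = ∏ j, ((z * ζ^k) - a j) := by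
      rw [hQ, Polynomial.eval_prod]
      simp
    rw [h2, ← hee]
    exact h1
  have hle : Complex.abs (∑ k ∈ Finset.range m, Polynomial.eval (z * ζ^k) Q)
      ≤ ∑ k ∈ Finset.range m, Complex.abs (Polynomial.eval (z * ζ^k) Q) :=
    Complex.abs.sum_le _ _
  have hlt2 : ∑ k ∈ Finset.range m, Complex.abs (Polynomial.eval (z * ζ^k) Q)
      < ∑ k ∈ Finset.range m, 2 :=
    Finset.sum_lt_sum_of_nonempty (by simp; omega) hk
  rw [hsum] at hle
  have habs2 : Complex.abs (2 * m * c) = 2 * m := by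
    rw [map_mul, map_mul, hcabs, mul_one, Complex.abs_two, Complex.abs_natCast]
  rw [habs2] at hle
  rw [Finset.sum_const, Finset.card_range, nsmul_eq_mul] at hlt2
  have : (2:ℝ) * m < 2 * m := lt_of_le_of_lt hle (by linarith)
  linarith

lemma exists_ge_two {m : ℕ} (hm : 1 ≤ m) (φ : Fin m → ℝ) : ∃ s : ℝ, 2 ≤ Pf φ s := by
  obtain ⟨s, hs⟩ := exists_abs_ge_two hm φ
  exact ⟨s, by rw [Pf_eq]; exact hs⟩

def Aset {m : ℕ} (φ : Fin m → ℝ) (h : ℝ) : Set ℝ :=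
  {t : ℝ | t ∈ Set.Ico 0 (2*π) ∧ h ≤ Pf φ t}

noncomputable def measf {m : ℕ} (φ : Fin m → ℝ) (h : ℝ) : ℝ := (volume (Aset φ h)).toReal

lemma Aset_mble {m : ℕ} (φ : Fin m → ℝ) (h : ℝ) : MeasurableSet (Aset φ h) := by
  have : Aset φ h = Set.Ico 0 (2*π) ∩ (Pf φ) ⁻¹' (Set.Ici h) := rfl
  rw [this]
  exact measurableSet_Ico.inter ((continuous_Pf_t φ).measurable measurableSet_Ici)

lemma Aset_subset {m : ℕ} (φ : Fin m → ℝ) (h : ℝ) : Aset φ h ⊆ Set.Ico 0 (2*π) :=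
  fun _ ht => ht.1

lemma vol_Ico_ne_top : volume (Set.Ico (0:ℝ) (2*π)) ≠ ⊤ := by
  rw [Real.volume_Ico]; exact ENNReal.ofReal_ne_top

lemma Aset_vol_ne_top {m : ℕ} (φ : Fin m → ℝ) (h : ℝ) : volume (Aset φ h) ≠ ⊤ :=
  ne_top_of_le_ne_top vol_Ico_ne_top (measure_mono (Aset_subset φ h))

lemma continuous_measf {m : ℕ} (hm : 1 ≤ m) (h : ℝ) :
    Continuous (fun φ : Fin m → ℝ => measf φ h) := by
  rw [continuous_iff_continuousAt]
  intro φ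
  have hE : volume {t : ℝ | t ∈ Set.Ico 0 (2*π) ∧ Pf φ t = h} = 0 :=
    (finite_level hm φ h).measure_zero _
  have htend : Filter.Tendsto (fun ψ : Fin m → ℝ => volume (Aset ψ h)) (nhds φ)
      (nhds (volume (Aset φ h))) := by
    refine MeasureTheory.tendsto_measure_of_ae_tendsto_indicator (nhds φ)
      (Aset_mble φ h) (fun ψ => Aset_mble ψ h) measurableSet_Ico
      vol_Ico_ne_top (Filter.Eventually.of_forall fun ψ => Aset_subset ψ h) ?_
    filter_upwards [measure_eq_zero_iff_ae_notMem.1 hE] with t ht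
    by_cases hIco : t ∈ Set.Ico 0 (2*π)
    · have hne : Pf φ t ≠ h := fun he => ht ⟨hIco, he⟩
      rcases hne.lt_or_gt with hlt | hgt
      · have hopen : IsOpen {ψ : Fin m → ℝ | Pf ψ t < h} :=
          isOpen_lt (continuous_Pf_phi t) continuous_const
        filter_upwards [hopen.mem_nhds hlt] with ψ hψ
        simp only [Aset, Set.mem_setOf_eq]
        exact ⟨fun hc => absurd hc.2 (not_le.2 hψ), fun hc => absurd hc.2 (not_le.2 hlt)⟩
      · have hopen : IsOpen {ψ : Fin m → ℝ | h < Pf ψ t} :=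
          isOpen_lt continuous_const (continuous_Pf_phi t)
        filter_upwards [hopen.mem_nhds hgt] with ψ hψ
        simp only [Aset, Set.mem_setOf_eq]
        exact ⟨fun _ => ⟨hIco, hgt.le⟩, fun _ => ⟨hIco, hψ.le⟩⟩
    · exact Filter.Eventually.of_forall fun ψ =>
        ⟨fun hc => absurd hc.1 hIco, fun hc => absurd hc.1 hIco⟩
  exact (ENNReal.tendsto_toReal (Aset_vol_ne_top φ h)).comp htend

lemma mem_Ico_reduce (x : ℝ) : x - 2*π*⌊x/(2*π)⌋ ∈ Set.Ico 0 (2*π) := by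
  have hπ := Real.pi_pos
  have h2π : (0:ℝ) < 2*π := by linarith
  have heq : x - 2*π*⌊x/(2*π)⌋ = 2*π * Int.fract (x / (2*π)) := by
    rw [Int.fract]
    field_simp
  rw [heq]
  constructor
  · nlinarith [Int.fract_nonneg (x / (2*π))]
  · nlinarith [Int.fract_lt_one (x / (2*π)), Int.fract_nonneg (x / (2*π))]

lemma exists_min {m : ℕ} (hm : 1 ≤ m) (h : ℝ) :
    ∃ φ : Fin m → ℝ, ∀ ψ : Fin m → ℝ, measf φ h ≤ measf ψ h := by
  have hπ := Real.pi_pos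
  obtain ⟨φ0, hφ0K, hmin⟩ := (isCompact_univ_pi fun _ : Fin m => isCompact_Icc
      (a := (0:ℝ)) (b := 2*π)).exists_isMinOn
    ⟨fun _ => 0, fun j _ => Set.mem_Icc.2 ⟨le_rfl, by simp; linarith⟩⟩
    ((continuous_measf hm h).continuousOn)
  refine ⟨φ0, fun ψ => ?_⟩
  set ψ' : Fin m → ℝ := fun j => ψ j - 2*π*⌊ψ j/(2*π)⌋ with hψ'
  have hmem : ψ' ∈ Set.pi Set.univ (fun _ : Fin m => Set.Icc (0:ℝ) (2*π)) := by
    intro j _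
    have := mem_Ico_reduce (ψ j)
    exact ⟨this.1, this.2.le⟩
  have heq : measf ψ' h = measf ψ h := by
    have hPf : ∀ t, Pf ψ' t = Pf ψ t := fun t => Pf_shift ψ (fun j => ⌊ψ j/(2*π)⌋) t
    have hset : Aset ψ' h = Aset ψ h := by
      unfold Aset
      ext t
      simp only [Set.mem_setOf_eq, hPf]
    unfold measf
    rw [hset]
  rw [← heq]
  exact isMinOn_iff.1 hmin ψ' hmem


lemma measf_strict {m : ℕ} (hm : 1 ≤ m) (φ : Fin m → ℝ) {h1 h2 : ℝ}
    (h10 : 0 ≤ h1) (hlt : h1 < h2) (h22 : h2 ≤ 2) :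
    measf φ h2 < measf φ h1 := by
  have hπ := Real.pi_pos
  obtain ⟨s, hs⟩ := exists_ge_two hm φ
  set y := (h1 + h2)/2 with hy
  have hy1 : h1 < y := by rw [hy]; linarith
  have hy2 : y < h2 := by rw [hy]; linarith
  have hy0 : 0 ≤ y := by linarith
  have hys : y ≤ Pf φ s := by linarith
  have j0 : Fin m := ⟨0, by omega⟩
  have hzero : Pf φ (φ j0) = 0 := by
    unfold Pf
    apply Finset.prod_eq_zero (Finset.mem_univ j0)
    simp
  obtain ⟨t2, _, ht2⟩ := intermediate_value_uIcc
    (a := φ j0) (b := s) ((continuous_Pf_t φ).continuousOn)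
    (by rw [hzero, Set.mem_uIcc]; exact Or.inl ⟨hy0, hys⟩)
  set t3 := t2 - 2*π*⌊t2/(2*π)⌋ with ht3def
  have ht3mem : t3 ∈ Set.Ico 0 (2*π) := mem_Ico_reduce t2
  have ht3 : Pf φ t3 = y := by rw [ht3def, Pf_period]; exact ht2
  obtain ⟨ε, hε, hball⟩ := Metric.continuousAt_iff.1 ((continuous_Pf_t φ).continuousAt (x := t3))
    ((h2 - h1)/2) (by linarith)
  set b := min (t3 + ε) (2*π) with hb
  have ht3b : t3 < b := lt_min (by linarith) ht3mem.2
  have hsubset : Set.Ioo t3 b ⊆ Aset φ h1 \ Aset φ h2 := by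
    intro t ht
    have hd : dist t t3 < ε := by
      rw [Real.dist_eq, abs_lt]
      constructor
      · linarith [ht.1]
      · have : t < t3 + ε := lt_of_lt_of_le ht.2 (min_le_left _ _)
        linarith
    have hPf := hball hd
    rw [Real.dist_eq, ht3, abs_lt] at hPf
    have hmemI : t ∈ Set.Ico 0 (2*π) :=
      ⟨le_trans ht3mem.1 ht.1.le, lt_of_lt_of_le ht.2 (min_le_right _ _)⟩
    refine ⟨⟨hmemI, by linarith [hPf.1, hPf.2]⟩, ?_⟩
    intro hc
    exact absurd hc.2 (not_le.2 (by linarith [hPf.1, hPf.2]))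
  have hsub12 : Aset φ h2 ⊆ Aset φ h1 := fun t ht => ⟨ht.1, le_trans hlt.le ht.2⟩
  have hpos : 0 < volume (Aset φ h1 \ Aset φ h2) := by
    refine lt_of_lt_of_le ?_ (measure_mono hsubset)
    rw [Real.volume_Ioo]
    exact ENNReal.ofReal_pos.2 (by linarith)
  have key : volume (Aset φ h2) < volume (Aset φ h1) := by
    calc volume (Aset φ h2) < volume (Aset φ h2) + volume (Aset φ h1 \ Aset φ h2) :=
        ENNReal.lt_add_right (Aset_vol_ne_top φ h2) hpos.ne'
    _ = volume (Aset φ h2 ∪ Aset φ h1 \ Aset φ h2) :=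
        (measure_union disjoint_sdiff_self_right ((Aset_mble φ h1).diff (Aset_mble φ h2))).symm
    _ = volume (Aset φ h1) := by rw [Set.union_diff_cancel hsub12]
  exact (ENNReal.toReal_lt_toReal (Aset_vol_ne_top φ h2) (Aset_vol_ne_top φ h1)).2 key

lemma finite_of_root {S : Set ℝ} (p : Polynomial ℂ) (hp : p ≠ 0)
    (hS : S ⊆ Set.Ico 0 (2*π)) (hroot : ∀ t ∈ S, p.IsRoot (ee t)) : S.Finite := by
  apply Set.Finite.of_finite_image (f := ee) ?_ (injOn_ee.mono hS)
  apply Set.Finite.subset (Polynomial.finite_setOf_isRoot hp)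
  rintro z ⟨t, htS, rfl⟩
  exact hroot t htS

lemma exists_measf_two_zero {m : ℕ} (hm : 1 ≤ m) : ∃ φ : Fin m → ℝ, measf φ 2 = 0 := by
  set φ : Fin m → ℝ := fun j => 2*π*(j:ℕ)/m with hφ
  refine ⟨φ, ?_⟩
  set ζ : ℂ := Complex.exp (2 * π * Complex.I / m) with hζ
  have hprim : IsPrimitiveRoot ζ m := Complex.isPrimitiveRoot_exp m (by omega)
  have heeφ : ∀ j : Fin m, ee (φ j) = ζ^(j:ℕ) := by
    intro j
    rw [hφ, hζ, ee, ← Complex.exp_nat_mul]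
    congr 1
    push_cast
    ring
  have hident : ∀ t : ℝ, Pf φ t = Complex.abs ((ee t)^m - 1) := by
    intro t
    rw [Pf_eq]
    congr 1
    rw [Finset.prod_congr rfl fun j _ => by rw [heeφ j],
      Fin.prod_univ_eq_prod_range (fun i => ee t - ζ^i) m]
    have h3 := X_pow_sub_C_eq_prod hprim (by omega : 0 < m) (one_pow m)
    have h4 := congrArg (Polynomial.eval (ee t)) h3
    simp only [Polynomial.eval_sub, Polynomial.eval_pow, Polynomial.eval_X, Polynomial.eval_C,
      Polynomial.eval_prod, mul_one] at h4
    rw [← h4]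
  have hroot : ∀ t ∈ Aset φ 2,
      Polynomial.IsRoot (Polynomial.X^m + Polynomial.C 1) (ee t) := by
    rintro t ⟨htI, htP⟩
    rw [hident] at htP
    set u := (ee t)^m with hu
    have huabs : Complex.abs u = 1 := by rw [hu, map_pow, ee_abs, one_pow]
    have hle : Complex.abs (u - 1) ≤ 2 := by
      rw [show u - 1 = u + (-1) by ring]
      calc Complex.abs (u + (-1)) ≤ Complex.abs u + Complex.abs (-1) := Complex.abs.add_le _ _
      _ = 2 := by rw [huabs]; simp; norm_num
    have habs2 : Complex.abs (u - 1) = 2 := le_antisymm hle htP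
    have hnsq : Complex.normSq (u - 1) = 4 := by
      rw [← Complex.sq_abs, habs2]; norm_num
    have hnu : Complex.normSq u = 1 := by rw [← Complex.sq_abs, huabs]; norm_num
    have h5 : Complex.normSq (u-1) = Complex.normSq u - 2*u.re + 1 := by
      simp only [Complex.normSq_apply, Complex.sub_re, Complex.sub_im, Complex.one_re,
        Complex.one_im]
      ring
    have hre : u.re = -1 := by rw [hnsq, hnu] at h5; linarith
    have him2 : u.im^2 = 0 := by
      have h6 : u.re * u.re + u.im * u.im = 1 := by
        rw [← Complex.normSq_apply, hnu]
      nlinarith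
    have him : u.im = 0 := by
      have := sq_eq_zero_iff.1 him2
      exact this
    have hu1 : u = -1 := by
      apply Complex.ext
      · rw [hre]; simp
      · rw [him]; simp
    rw [Polynomial.IsRoot.def]
    simp only [Polynomial.eval_add, Polynomial.eval_pow, Polynomial.eval_X, Polynomial.eval_C]
    rw [← hu, hu1]
    ring
  have hfin : (Aset φ 2).Finite :=
    finite_of_root (Polynomial.X^m + Polynomial.C 1)
      (Polynomial.X_pow_add_C_ne_zero (by omega) 1) (fun t ht => ht.1) hroot
  unfold measf
  rw [hfin.measure_zero]
  simp

lemma measf_nonneg {m : ℕ} (φ : Fin m → ℝ) (h : ℝ) : 0 ≤ measf φ h := ENNReal.toReal_nonneg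

lemma measf_zero {m : ℕ} (φ : Fin m → ℝ) : measf φ 0 = 2*π := by
  have hset : Aset φ 0 = Set.Ico 0 (2*π) := by
    ext t; exact ⟨fun ht => ht.1, fun ht => ⟨ht, Pf_nonneg φ t⟩⟩
  unfold measf
  rw [hset, Real.volume_Ico, sub_zero, ENNReal.toReal_ofReal (by positivity)]

theorem main {m : ℕ} (hm : 1 ≤ m) :
    StrictAntiOn (fun h => sInf {μ : ℝ | ∃ φ : Fin m → ℝ, μ = measf φ h}) (Set.Icc 0 2) ∧
      sInf {μ : ℝ | ∃ φ : Fin m → ℝ, μ = measf φ 0} = 2 * Real.pi ∧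
      sInf {μ : ℝ | ∃ φ : Fin m → ℝ, μ = measf φ 2} = 0 ∧
      ∀ h ∈ Set.Icc (0 : ℝ) 2, ∃ φ : Fin m → ℝ,
        sInf {μ : ℝ | ∃ φ' : Fin m → ℝ, μ = measf φ' h} = measf φ h := by
  have hbdd : ∀ h : ℝ, BddBelow {μ : ℝ | ∃ φ : Fin m → ℝ, μ = measf φ h} := fun h =>
    ⟨0, by rintro μ ⟨ψ, rfl⟩; exact measf_nonneg ψ h⟩
  have hatt : ∀ h : ℝ, ∃ φ : Fin m → ℝ,
      sInf {μ : ℝ | ∃ φ' : Fin m → ℝ, μ = measf φ' h} = measf φ h := by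
    intro h
    obtain ⟨φ0, hφ0⟩ := exists_min hm h
    exact ⟨φ0, IsLeast.csInf_eq ⟨⟨φ0, rfl⟩, by rintro μ ⟨ψ, rfl⟩; exact hφ0 ψ⟩⟩
  refine ⟨?_, ?_, ?_, fun h _ => hatt h⟩
  · intro h1 h1m h2 h2m hlt
    obtain ⟨φ1, hδ1⟩ := hatt h1
    calc sInf {μ : ℝ | ∃ φ : Fin m → ℝ, μ = measf φ h2} ≤ measf φ1 h2 :=
        csInf_le (hbdd h2) ⟨φ1, rfl⟩
    _ < measf φ1 h1 := measf_strict hm φ1 h1m.1 hlt h2m.2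
    _ = sInf {μ : ℝ | ∃ φ : Fin m → ℝ, μ = measf φ h1} := hδ1.symm
  · have hset : {μ : ℝ | ∃ φ : Fin m → ℝ, μ = measf φ 0} = {2*Real.pi} := by
      ext μ
      simp only [Set.mem_setOf_eq, Set.mem_singleton_iff]
      constructor
      · rintro ⟨ψ, rfl⟩; exact measf_zero ψ
      · rintro rfl; exact ⟨fun _ => 0, (measf_zero _).symm⟩
    rw [hset, csInf_singleton]
  · obtain ⟨φ2, hφ2⟩ := exists_measf_two_zero hm
    apply le_antisymm
    · exact csInf_le (hbdd 2) ⟨φ2, hφ2.symm⟩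
    · exact le_csInf ⟨measf (fun _ => 0) 2, ⟨fun _ => 0, rfl⟩⟩
        (by rintro μ ⟨ψ, rfl⟩; exact measf_nonneg ψ 2)

end Stmt16

theorem stmt_16 (m : ℕ) (hm : 1 ≤ m) :
    let meas : (Fin m → ℝ) → ℝ → ℝ := fun φ h =>
      (volume {t : ℝ | t ∈ Set.Ico 0 (2 * Real.pi) ∧
        h ≤ ∏ j, |2 * Real.sin ((t - φ j) / 2)|}).toReal
    let δ : ℝ → ℝ := fun h => sInf {μ : ℝ | ∃ φ : Fin m → ℝ, μ = meas φ h}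
    StrictAntiOn δ (Set.Icc 0 2) ∧ δ 0 = 2 * Real.pi ∧ δ 2 = 0 ∧
      ∀ h ∈ Set.Icc (0 : ℝ) 2, ∃ φ : Fin m → ℝ, δ h = meas φ h := by
  intro meas δ
  exact Stmt16.main hm
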